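/- For every integer n > 2, the determining index of the complete graph K_n satisfies det'(K_n) = ⌊2n/3⌋. -/

import Mathlib

/-- `S` is a vertex determining set of `G`: the only automorphism of `G`
fixing every vertex of `S` is the identity. -/
def IsVertexDetSet {V : Type*} (G : SimpleGraph V) (S : Set V) : Prop :=
  ∀ φ : G ≃g G, (∀ v ∈ S, φ v = v) → ∀ w, φ w = w

/-- `T` is an edge determining set of `G`: `T` consists of edges of `G`, and the only
automorphism of `G` mapping each edge of `T` to itself (as an unordered pair) is the identity. -/
def IsEdgeDetSet {V : Type*} (G : SimpleGraph V) (T : Set (Sym2 V)) : Prop :=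
  T ⊆ G.edgeSet ∧ ∀ φ : G ≃g G, (∀ e ∈ T, Sym2.map φ e = e) → ∀ w, φ w = w

/-- The determining number `det(G)`: the minimum size of a vertex determining set. -/
noncomputable def detNum {V : Type*} (G : SimpleGraph V) : ℕ :=
  sInf {k | ∃ S : Finset V, S.card = k ∧ IsVertexDetSet G ↑S}

/-- The determining index `det'(G)`: the minimum size of an edge determining set. -/
noncomputable def detIndex {V : Type*} (G : SimpleGraph V) : ℕ :=
  sInf {k | ∃ T : Finset (Sym2 V), T.card = k ∧ IsEdgeDetSet G ↑T}

open SimpleGraph Finset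
open Fin.NatCast



def permIso {V : Type*} (σ : Equiv.Perm V) :
    (⊤ : SimpleGraph V) ≃g (⊤ : SimpleGraph V) where
  toEquiv := σ
  map_rel_iff' := by simp [SimpleGraph.top_adj]

@[simp] lemma permIso_apply {V : Type*} (σ : Equiv.Perm V) (v : V) : permIso σ v = σ v := rfl

lemma mem_mem_ne {V : Type*} {e : Sym2 V} {v w : V} (hv : v ∈ e) (hw : w ∈ e) (hvw : v ≠ w) :
    e = s(v, w) := by
  induction e with
  | _ x y =>
    rw [Sym2.mem_iff] at hv hw
    rcases hv with rfl | rfl <;> rcases hw with h | h <;> simp_all [Sym2.eq_swap]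

lemma pair_filter_card {V : Type*} [Fintype V] [DecidableEq V] {a b : V} (hab : a ≠ b) :
    (Finset.univ.filter (fun v => v ∈ s(a, b))).card = 2 := by
  have h : Finset.univ.filter (fun v => v ∈ s(a, b)) = {a, b} := by
    ext v; simp [Sym2.mem_iff]
  rw [h, Finset.card_insert_of_notMem (by simpa using hab), Finset.card_singleton]

lemma lower_bound {n : ℕ} (hn : 2 < n) (T : Finset (Sym2 (Fin n)))
    (hT : IsEdgeDetSet (⊤ : SimpleGraph (Fin n)) ↑T) : 2 * n / 3 ≤ T.card := by
  classical
  set deg : Fin n → ℕ := fun v => (T.filter (fun e => v ∈ e)).card with hdeg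
  -- at most one uncovered vertex
  have huncov : (univ.filter (fun v => deg v = 0)).card ≤ 1 := by
    by_contra h
    push_neg at h
    obtain ⟨u, hu, v, hv, huv⟩ := Finset.one_lt_card.mp h
    simp only [mem_filter, mem_univ, true_and, hdeg, Finset.card_eq_zero,
      Finset.filter_eq_empty_iff] at hu hv
    have key : ∀ e ∈ (↑T : Set (Sym2 (Fin n))), Sym2.map (permIso (Equiv.swap u v)) e = e := by
      intro e he
      induction e with
      | _ a b =>
        have ha : a ≠ u ∧ a ≠ v := ⟨fun h' => hu he (h' ▸ Sym2.mem_mk_left a b),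
          fun h' => hv he (h' ▸ Sym2.mem_mk_left a b)⟩
        have hb : b ≠ u ∧ b ≠ v := ⟨fun h' => hu he (h' ▸ Sym2.mem_mk_right a b),
          fun h' => hv he (h' ▸ Sym2.mem_mk_right a b)⟩
        rw [Sym2.map_pair_eq]
        simp [Equiv.swap_apply_of_ne_of_ne ha.1 ha.2, Equiv.swap_apply_of_ne_of_ne hb.1 hb.2]
    have := hT.2 (permIso (Equiv.swap u v)) key u
    simp [Equiv.swap_apply_left] at this
    exact huv this.symm
  -- every edge has an endpoint of degree ≥ 2
  have hstep2 : ∀ e ∈ T, ∃ v, v ∈ e ∧ 2 ≤ deg v := by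
    intro e he
    induction e with
    | _ a b =>
      have hab : a ≠ b := by
        have := hT.1 (Finset.mem_coe.mpr he)
        simpa [SimpleGraph.mem_edgeSet] using this
      by_contra h
      push_neg at h
      have hda : deg a ≤ 1 := by
        have := h a (Sym2.mem_mk_left a b); omega
      have hdb : deg b ≤ 1 := by
        have := h b (Sym2.mem_mk_right a b); omega
      have hauniq : ∀ e' ∈ T, a ∈ e' → e' = s(a, b) :=
        fun e' he' hae' => Finset.card_le_one.mp hda e' (by simp [he', hae'])
          s(a, b) (by simp [he])
      have hbuniq : ∀ e' ∈ T, b ∈ e' → e' = s(a, b) :=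
        fun e' he' hbe' => Finset.card_le_one.mp hdb e' (by simp [he', hbe'])
          s(a, b) (by simp [he])
      have key : ∀ e' ∈ (↑T : Set (Sym2 (Fin n))),
          Sym2.map (permIso (Equiv.swap a b)) e' = e' := by
        intro e' he'
        by_cases hcase : e' = s(a, b)
        · subst hcase
          rw [Sym2.map_pair_eq]
          simp [Equiv.swap_apply_left, Equiv.swap_apply_right, Sym2.eq_swap]
        · induction e' with
          | _ x y =>
            have hx : x ≠ a ∧ x ≠ b := ⟨fun h' => hcase (hauniq _ he' (h' ▸ Sym2.mem_mk_left x y)),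
              fun h' => hcase (hbuniq _ he' (h' ▸ Sym2.mem_mk_left x y))⟩
            have hy : y ≠ a ∧ y ≠ b := ⟨fun h' => hcase (hauniq _ he' (h' ▸ Sym2.mem_mk_right x y)),
              fun h' => hcase (hbuniq _ he' (h' ▸ Sym2.mem_mk_right x y))⟩
            rw [Sym2.map_pair_eq]
            simp [Equiv.swap_apply_of_ne_of_ne hx.1 hx.2, Equiv.swap_apply_of_ne_of_ne hy.1 hy.2]
      have := hT.2 (permIso (Equiv.swap a b)) key a
      simp [Equiv.swap_apply_left] at this
      exact hab this.symm
  -- total degree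
  have hsum : ∑ v : Fin n, deg v = 2 * T.card := by
    have h1 : ∀ v : Fin n, deg v = ∑ e ∈ T, if v ∈ e then 1 else 0 := by
      intro v; rw [hdeg]; exact Finset.card_filter _ _
    calc ∑ v : Fin n, deg v = ∑ v : Fin n, ∑ e ∈ T, if v ∈ e then 1 else 0 := by
          exact Finset.sum_congr rfl fun v _ => h1 v
      _ = ∑ e ∈ T, ∑ v : Fin n, if v ∈ e then 1 else 0 := Finset.sum_comm
      _ = ∑ e ∈ T, 2 := by
          refine Finset.sum_congr rfl fun e he => ?_
          induction e with
          | _ a b =>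
            have hab : a ≠ b := by
              have := hT.1 (Finset.mem_coe.mpr he)
              simpa [SimpleGraph.mem_edgeSet] using this
            rw [← Finset.card_filter]
            exact pair_filter_card hab
      _ = 2 * T.card := by rw [Finset.sum_const, smul_eq_mul, mul_comm]
  set D0 := univ.filter (fun v => deg v = 0) with hD0
  set D1 := univ.filter (fun v => deg v = 1) with hD1
  set D2 := univ.filter (fun v => 2 ≤ deg v) with hD2
  have hdisj12 : Disjoint D1 D2 := by
    rw [Finset.disjoint_left]; intro v h1 h2
    simp [hD1, hD2] at h1 h2; omega
  have hdisj0 : Disjoint (D1 ∪ D2) D0 := by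
    rw [Finset.disjoint_left]; intro v h1 h2
    simp [hD0, hD1, hD2] at h1 h2; omega
  have hpart : D1.card + D2.card + D0.card = n := by
    have hu : (D1 ∪ D2) ∪ D0 = univ := by
      ext v; simp [hD0, hD1, hD2]; omega
    have := Finset.card_union_of_disjoint hdisj0
    rw [hu, Finset.card_union_of_disjoint hdisj12] at this
    simpa using this.symm
  -- D1.card ≤ T.card
  have hD1T : D1.card ≤ T.card := by
    set f : Fin n → Sym2 (Fin n) := fun v =>
      if h : ∃ e ∈ T, v ∈ e then h.choose else s(v, v) with hf
    have hfv : ∀ v ∈ D1, f v ∈ T ∧ v ∈ f v := by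
      intro v hv
      simp only [hD1, mem_filter, mem_univ, true_and, hdeg] at hv
      have hne : ∃ e ∈ T, v ∈ e := by
        have : (T.filter (fun e => v ∈ e)).Nonempty := Finset.card_pos.mp (by omega)
        obtain ⟨e, he⟩ := this
        simp only [mem_filter] at he
        exact ⟨e, he.1, he.2⟩
      rw [hf]
      simp only [dif_pos hne]
      exact ⟨hne.choose_spec.1, hne.choose_spec.2⟩
    refine Finset.card_le_card_of_injOn f (fun v hv => (hfv v hv).1) ?_
    intro v hv w hw hvw
    by_contra hne
    have hv' := hfv v (by simpa using hv)
    have hw' := hfv w (by simpa using hw)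
    have : f v = s(v, w) := mem_mem_ne hv'.2 (hvw ▸ hw'.2) hne
    obtain ⟨x, hx, hdx⟩ := hstep2 (f v) hv'.1
    rw [this, Sym2.mem_iff] at hx
    have hv1 : deg v = 1 := by simpa [hD1] using Finset.mem_coe.mp hv
    have hw1 : deg w = 1 := by simpa [hD1] using Finset.mem_coe.mp hw
    rcases hx with h | h <;> rw [h] at hdx <;> omega
  -- sum lower bound
  have hge : D1.card + 2 * D2.card ≤ ∑ v : Fin n, deg v := by
    have hsub : D1 ∪ D2 ⊆ univ := Finset.subset_univ _
    have h1 : ∑ v ∈ D1 ∪ D2, deg v ≤ ∑ v : Fin n, deg v :=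
      Finset.sum_le_sum_of_subset hsub
    rw [Finset.sum_union hdisj12] at h1
    have h2 : ∑ v ∈ D1, deg v = D1.card := by
      rw [Finset.sum_congr rfl (fun v hv => by
        simp only [hD1, mem_filter] at hv; exact hv.2), Finset.sum_const, smul_eq_mul, mul_one]
    have h3 : 2 * D2.card ≤ ∑ v ∈ D2, deg v := by
      have := Finset.card_nsmul_le_sum D2 deg 2 (fun v hv => by
        simp only [hD2, mem_filter] at hv; exact hv.2)
      simpa [mul_comm] using this
    omega
  omega



lemma lemA {V : Type*} (f : V → V) {a b c : V} (hab : a ≠ b) (hbc : b ≠ c) (hac : a ≠ c)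
    (h1 : s(f a, f b) = s(a, b)) (h2 : s(f b, f c) = s(b, c)) :
    f a = a ∧ f b = b ∧ f c = c := by
  rw [Sym2.eq_iff] at h1 h2
  rcases h1 with ⟨h1a, h1b⟩ | ⟨h1a, h1b⟩ <;> rcases h2 with ⟨h2a, h2b⟩ | ⟨h2a, h2b⟩ <;>
    simp_all

lemma lemEdge {V : Type*} (f : V → V) {a b : V} (ha : f a = a)
    (h : s(f a, f b) = s(a, b)) : f b = b := by
  rw [Sym2.eq_iff] at h
  rcases h with ⟨h1, h2⟩ | ⟨h1, h2⟩ <;> simp_all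

lemma lemB {V : Type*} {G : SimpleGraph V} (φ : G ≃g G) (v : V)
    (h : ∀ w, w ≠ v → φ w = w) : ∀ w, φ w = w := by
  intro w
  by_cases hw : w = v
  · subst hw
    by_contra hv
    have h1 : φ (φ w) = φ w := h _ hv
    exact hv (φ.injective h1)
  · exact h w hw

/-- The edge between (casts of) `i` and `i+1` in `Fin n`. -/
def eg (n : ℕ) [NeZero n] (i : ℕ) : Sym2 (Fin n) := s((i : Fin n), ((i + 1 : ℕ) : Fin n))

lemma eg_mem_edgeSet {n : ℕ} [NeZero n] {i : ℕ} (h : i + 1 < n) :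
    eg n i ∈ (⊤ : SimpleGraph (Fin n)).edgeSet := by
  rw [eg, SimpleGraph.mem_edgeSet, SimpleGraph.top_adj]
  intro hc
  have := congrArg Fin.val hc
  rw [Fin.val_cast_of_lt (by omega), Fin.val_cast_of_lt h] at this
  omega

lemma eg_inj {n : ℕ} [NeZero n] {i j : ℕ} (hi : i + 1 < n) (hj : j + 1 < n)
    (h : eg n i = eg n j) : i = j := by
  rw [eg, eg, Sym2.eq_iff] at h
  rcases h with ⟨h1, h2⟩ | ⟨h1, h2⟩ <;>
  · have e1 := congrArg Fin.val h1
    have e2 := congrArg Fin.val h2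
    rw [Fin.val_cast_of_lt (by omega), Fin.val_cast_of_lt (by omega)] at e1 e2
    omega

/-- If an automorphism fixes both edges of the `m`-th path block for all `m < k`,
then it fixes all vertices with value `< 3*k`. -/
lemma blockFix {n : ℕ} [NeZero n] (f : Fin n → Fin n) (k : ℕ) (h3k : 3 * k ≤ n)
    (hed : ∀ m < k, Sym2.map f (eg n (3 * m)) = eg n (3 * m) ∧
      Sym2.map f (eg n (3 * m + 1)) = eg n (3 * m + 1)) :
    ∀ w : Fin n, (w : ℕ) < 3 * k → f w = w := by
  intro w hw
  set m := (w : ℕ) / 3 with hm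
  have hmk : m < k := by omega
  have hb : 3 * m + 2 < n := by omega
  set a : Fin n := ((3 * m : ℕ) : Fin n)
  set b : Fin n := ((3 * m + 1 : ℕ) : Fin n)
  set c : Fin n := ((3 * m + 2 : ℕ) : Fin n)
  have hav : (a : ℕ) = 3 * m := Fin.val_cast_of_lt (by omega)
  have hbv : (b : ℕ) = 3 * m + 1 := Fin.val_cast_of_lt (by omega)
  have hcv : (c : ℕ) = 3 * m + 2 := Fin.val_cast_of_lt (by omega)
  have hab : a ≠ b := fun h => by
    have := congrArg Fin.val h; rw [hav, hbv] at this; omega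
  have hbc : b ≠ c := fun h => by
    have := congrArg Fin.val h; rw [hbv, hcv] at this; omega
  have hac : a ≠ c := fun h => by
    have := congrArg Fin.val h; rw [hav, hcv] at this; omega
  obtain ⟨h1, h2⟩ := hed m hmk
  rw [eg, Sym2.map_pair_eq] at h1 h2
  have h2' : s(f b, f c) = s(b, c) := by
    rwa [show 3 * m + 1 + 1 = 3 * m + 2 by omega] at h2
  have key := lemA f hab hbc hac h1 h2'
  have hwv : (w : ℕ) = 3 * m ∨ (w : ℕ) = 3 * m + 1 ∨ (w : ℕ) = 3 * m + 2 := by omega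
  have hwc : w = (((w : ℕ) : ℕ) : Fin n) := by rw [Fin.cast_val_eq_self]
  rcases hwv with h | h | h <;> rw [hwc, h]
  · exact key.1
  · exact key.2.1
  · exact key.2.2

/-- index `j` ↦ vertex index of the `j`-th normal edge. -/
def vj (j : ℕ) : ℕ := 3 * (j / 2) + j % 2

def gdef (k j : ℕ) : ℕ := if j = 2 * k then 3 * k - 1 else vj j

lemma upper_bound {n : ℕ} (hn : 2 < n) :
    ∃ T : Finset (Sym2 (Fin n)), T.card = 2 * n / 3 ∧
      IsEdgeDetSet (⊤ : SimpleGraph (Fin n)) ↑T := by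
  haveI : NeZero n := ⟨by omega⟩
  obtain ⟨k, hk | hk | hk⟩ : ∃ k, n = 3 * k ∨ n = 3 * k + 1 ∨ n = 3 * k + 2 :=
    ⟨n / 3, by omega⟩
  -- Case n = 3k
  · have hk1 : 1 ≤ k := by omega
    refine ⟨(Finset.range (2 * k)).image (fun j => eg n (vj j)), ?_, ?_, ?_⟩
    · rw [Finset.card_image_of_injOn, Finset.card_range]
      · omega
      · intro j hj j' hj' h
        simp only [Finset.coe_range, Set.mem_Iio] at hj hj'
        have := eg_inj (i := vj j) (j := vj j')
          (by unfold vj; omega) (by unfold vj; omega) h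
        unfold vj at this; omega
    · intro e he
      simp only [Finset.coe_image, Set.mem_image, Finset.mem_coe, Finset.mem_range] at he
      obtain ⟨j, hj, rfl⟩ := he
      exact eg_mem_edgeSet (by unfold vj; omega)
    · intro φ hφ
      have hed : ∀ m < k, Sym2.map φ (eg n (3 * m)) = eg n (3 * m) ∧
          Sym2.map φ (eg n (3 * m + 1)) = eg n (3 * m + 1) := by
        intro m hm
        constructor
        · refine hφ _ (Finset.mem_coe.mpr (Finset.mem_image.mpr
            ⟨2 * m, Finset.mem_range.mpr (by omega), ?_⟩))
          rw [show vj (2 * m) = 3 * m by unfold vj; omega]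
        · refine hφ _ (Finset.mem_coe.mpr (Finset.mem_image.mpr
            ⟨2 * m + 1, Finset.mem_range.mpr (by omega), ?_⟩))
          rw [show vj (2 * m + 1) = 3 * m + 1 by unfold vj; omega]
      have hfix := blockFix φ k (by omega) hed
      intro w
      exact hfix w (by have := w.isLt; omega)
  -- Case n = 3k + 1
  · have hk1 : 1 ≤ k := by omega
    refine ⟨(Finset.range (2 * k)).image (fun j => eg n (vj j)), ?_, ?_, ?_⟩
    · rw [Finset.card_image_of_injOn, Finset.card_range]
      · omega
      · intro j hj j' hj' h
        simp only [Finset.coe_range, Set.mem_Iio] at hj hj'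
        have := eg_inj (i := vj j) (j := vj j')
          (by unfold vj; omega) (by unfold vj; omega) h
        unfold vj at this; omega
    · intro e he
      simp only [Finset.coe_image, Set.mem_image, Finset.mem_coe, Finset.mem_range] at he
      obtain ⟨j, hj, rfl⟩ := he
      exact eg_mem_edgeSet (by unfold vj; omega)
    · intro φ hφ
      have hed : ∀ m < k, Sym2.map φ (eg n (3 * m)) = eg n (3 * m) ∧
          Sym2.map φ (eg n (3 * m + 1)) = eg n (3 * m + 1) := by
        intro m hm
        constructor
        · refine hφ _ (Finset.mem_coe.mpr (Finset.mem_image.mpr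
            ⟨2 * m, Finset.mem_range.mpr (by omega), ?_⟩))
          rw [show vj (2 * m) = 3 * m by unfold vj; omega]
        · refine hφ _ (Finset.mem_coe.mpr (Finset.mem_image.mpr
            ⟨2 * m + 1, Finset.mem_range.mpr (by omega), ?_⟩))
          rw [show vj (2 * m + 1) = 3 * m + 1 by unfold vj; omega]
      have hfix := blockFix φ k (by omega) hed
      refine lemB φ ((3 * k : ℕ) : Fin n) ?_
      intro w hw
      refine hfix w ?_
      have h1 : (w : ℕ) < n := w.isLt
      have h2 : (w : ℕ) ≠ 3 * k := by
        intro hc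
        apply hw
        rw [← Fin.cast_val_eq_self w, hc]
      omega
  -- Case n = 3k + 2
  · have hk1 : 1 ≤ k := by omega
    refine ⟨(Finset.range (2 * k + 1)).image (fun j => eg n (gdef k j)), ?_, ?_, ?_⟩
    · rw [Finset.card_image_of_injOn, Finset.card_range]
      · omega
      · intro j hj j' hj' h
        simp only [Finset.coe_range, Set.mem_Iio] at hj hj'
        have := eg_inj (i := gdef k j) (j := gdef k j')
          (by unfold gdef vj; split <;> omega) (by unfold gdef vj; split <;> omega) h
        unfold gdef vj at this
        split at this <;> split at this <;> omega
    · intro e he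
      simp only [Finset.coe_image, Set.mem_image, Finset.mem_coe, Finset.mem_range] at he
      obtain ⟨j, hj, rfl⟩ := he
      exact eg_mem_edgeSet (by unfold gdef vj; split <;> omega)
    · intro φ hφ
      have hed : ∀ m < k, Sym2.map φ (eg n (3 * m)) = eg n (3 * m) ∧
          Sym2.map φ (eg n (3 * m + 1)) = eg n (3 * m + 1) := by
        intro m hm
        constructor
        · refine hφ _ (Finset.mem_coe.mpr (Finset.mem_image.mpr
            ⟨2 * m, Finset.mem_range.mpr (by omega), ?_⟩))
          rw [show gdef k (2 * m) = 3 * m by unfold gdef vj; rw [if_neg (by omega)]; omega]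
        · refine hφ _ (Finset.mem_coe.mpr (Finset.mem_image.mpr
            ⟨2 * m + 1, Finset.mem_range.mpr (by omega), ?_⟩))
          rw [show gdef k (2 * m + 1) = 3 * m + 1 by
            unfold gdef vj; rw [if_neg (by omega)]; omega]
      have hfix := blockFix φ k (by omega) hed
      have hsp := hφ (eg n (3 * k - 1)) (Finset.mem_coe.mpr (Finset.mem_image.mpr
        ⟨2 * k, Finset.mem_range.mpr (by omega), by rw [show gdef k (2 * k) = 3 * k - 1 by
          unfold gdef; rw [if_pos rfl]]⟩))
      rw [eg, Sym2.map_pair_eq, show 3 * k - 1 + 1 = 3 * k by omega] at hsp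
      have hprev : φ (((3 * k - 1 : ℕ) : Fin n)) = ((3 * k - 1 : ℕ) : Fin n) := by
        refine hfix _ ?_
        rw [Fin.val_cast_of_lt (by omega)]
        omega
      have h3k : φ (((3 * k : ℕ) : Fin n)) = ((3 * k : ℕ) : Fin n) :=
        lemEdge φ hprev (by rw [hprev] at hsp ⊢; exact hsp)
      refine lemB φ ((3 * k + 1 : ℕ) : Fin n) ?_
      intro w hw
      have h1 : (w : ℕ) < n := w.isLt
      have h2 : (w : ℕ) ≠ 3 * k + 1 := by
        intro hc
        apply hw
        rw [← Fin.cast_val_eq_self w, hc]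
      by_cases h3 : (w : ℕ) = 3 * k
      · rw [← Fin.cast_val_eq_self w, h3]
        exact h3k
      · exact hfix w (by omega)


theorem detIndex_completeGraph (n : ℕ) (hn : 2 < n) :
    detIndex (⊤ : SimpleGraph (Fin n)) = 2 * n / 3 := by
  obtain ⟨T, hc, hdet⟩ := upper_bound hn
  have hmem : 2 * n / 3 ∈ {k | ∃ T : Finset (Sym2 (Fin n)), T.card = k ∧
      IsEdgeDetSet (⊤ : SimpleGraph (Fin n)) ↑T} := ⟨T, hc, hdet⟩
  refine le_antisymm (Nat.sInf_le hmem) ?_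
  obtain ⟨T', hc', hd'⟩ := Nat.sInf_mem (⟨_, hmem⟩ : Set.Nonempty _)
  rw [detIndex, ← hc']
  exact lower_bound hn T' hd'
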